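/- Suppose (Ω, ℱ, P) is nonatomic and ρ is a law-invariant monetary risk measure on L^∞(P) that is comonotonic convex (ρ(αX + (1−α)Y) ≤ αρ(X) + (1−α)ρ(Y) whenever X, Y are comonotonic and α ∈ [0,1]). Then the set of quantile functions 𝒬_ρ = {q_Z : Z ∈ 𝒜_ρ} is convex: for q₁, q₂ ∈ 𝒬_ρ and α ∈ [0,1], αq₁ + (1−α)q₂ is the quantile function of some element of 𝒜_ρ. -/

import Mathlib

open MeasureTheory ProbabilityTheory Filter Set

/-- `X` belongs to `L^∞(P)`: measurable and essentially bounded. -/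
def MemLinf {Ω : Type*} [MeasurableSpace Ω] (P : Measure Ω) (X : Ω → ℝ) : Prop :=
  Measurable X ∧ ∃ C : ℝ, ∀ᵐ ω ∂P, |X ω| ≤ C

/-- The upper quantile function `q_X(t) = inf {x : F_X(x) > t}` of `X` under `P`. -/
noncomputable def uq {Ω : Type*} [MeasurableSpace Ω] (P : Measure Ω)
    (X : Ω → ℝ) (t : ℝ) : ℝ :=
  sInf {x : ℝ | t < cdf (P.map X) x}

/-- `X` and `Y` are comonotonic: on a set `Ω₀` of full measure,
`(X(ω) − X(ω'))(Y(ω) − Y(ω')) ≥ 0` for all `ω, ω' ∈ Ω₀`. -/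
def Comonotonic {Ω : Type*} [MeasurableSpace Ω] (P : Measure Ω) (X Y : Ω → ℝ) : Prop :=
  ∃ Ω₀ : Set Ω, MeasurableSet Ω₀ ∧ P Ω₀ = 1 ∧
    ∀ ω ∈ Ω₀, ∀ ω' ∈ Ω₀, 0 ≤ (X ω - X ω') * (Y ω - Y ω')

open scoped ENNReal


section aux


noncomputable def qf (μ : Measure ℝ) (t : ℝ) : ℝ := sInf {x : ℝ | t < cdf μ x}

lemma qf_set_nonempty {μ : Measure ℝ} {C : ℝ} (hC : 1 ≤ cdf μ C) {t : ℝ} (ht : t < 1) :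
    {x : ℝ | t < cdf μ x}.Nonempty :=
  ⟨C, lt_of_lt_of_le ht hC⟩

lemma qf_set_bddBelow {μ : Measure ℝ} {C : ℝ} (hlow : ∀ x, x < -C → cdf μ x ≤ 0)
    {t : ℝ} (ht : 0 ≤ t) : BddBelow {x : ℝ | t < cdf μ x} := by
  refine ⟨-C, fun x hx => ?_⟩
  simp only [Set.mem_setOf_eq] at hx
  by_contra h
  push_neg at h
  exact absurd (lt_of_le_of_lt ht hx) (not_lt.2 (hlow x h))

lemma qf_le_of_lt_cdf {μ : Measure ℝ} {C : ℝ} (hlow : ∀ x, x < -C → cdf μ x ≤ 0)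
    {t x : ℝ} (ht : 0 ≤ t) (hx : t < cdf μ x) : qf μ t ≤ x :=
  csInf_le (qf_set_bddBelow hlow ht) hx

lemma qf_le_C {μ : Measure ℝ} {C : ℝ} (hC : 1 ≤ cdf μ C) (hlow : ∀ x, x < -C → cdf μ x ≤ 0)
    {t : ℝ} (ht : 0 ≤ t) (ht1 : t < 1) : qf μ t ≤ C :=
  qf_le_of_lt_cdf hlow ht (lt_of_lt_of_le ht1 hC)

lemma neg_C_le_qf {μ : Measure ℝ} {C : ℝ} (hC : 1 ≤ cdf μ C) (hlow : ∀ x, x < -C → cdf μ x ≤ 0)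
    {t : ℝ} (ht : 0 ≤ t) (ht1 : t < 1) : -C ≤ qf μ t := by
  refine le_csInf (qf_set_nonempty hC ht1) (fun x hx => ?_)
  simp only [Set.mem_setOf_eq] at hx
  by_contra h
  push_neg at h
  exact absurd (lt_of_le_of_lt ht hx) (not_lt.2 (hlow x h))

lemma qf_monoOn {μ : Measure ℝ} {C : ℝ} (hC : 1 ≤ cdf μ C) (hlow : ∀ x, x < -C → cdf μ x ≤ 0)
    {t t' : ℝ} (ht : 0 ≤ t) (ht' : t' < 1) (htt : t ≤ t') : qf μ t ≤ qf μ t' :=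
  csInf_le_csInf (qf_set_bddBelow hlow ht) (qf_set_nonempty hC ht')
    (fun x hx => lt_of_le_of_lt htt hx)

lemma lt_qf_of_cdf_lt {μ : Measure ℝ} {C : ℝ} (hC : 1 ≤ cdf μ C)
    {t x : ℝ} (ht1 : t < 1) (hx : cdf μ x < t) : x < qf μ t := by
  have hrc : ContinuousWithinAt (cdf μ) (Ici x) x := (cdf μ).right_continuous x
  have hev : ∀ᶠ y in nhdsWithin x (Ici x), cdf μ y < t :=
    hrc.eventually_lt continuousWithinAt_const hx
  rw [eventually_nhdsWithin_iff, Metric.eventually_nhds_iff] at hev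
  obtain ⟨δ, hδ, hδ'⟩ := hev
  have hxy : cdf μ (x + δ/2) < t := by
    refine hδ' ?_ (by simp [le_of_lt (half_pos hδ)])
    rw [Real.dist_eq, abs_of_nonneg (by linarith)]; linarith
  have : x + δ/2 ≤ qf μ t := by
    refine le_csInf (qf_set_nonempty hC ht1) (fun y hy => ?_)
    simp only [Set.mem_setOf_eq] at hy
    by_contra h
    push_neg at h
    have h2 := (cdf μ).mono h.le
    linarith
  linarith

lemma le_cdf_of_qf_le {μ : Measure ℝ} {C : ℝ} (hC : 1 ≤ cdf μ C)
    {t x : ℝ} (ht1 : t < 1) (h : qf μ t ≤ x) : t ≤ cdf μ x := by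
  by_contra hc
  push_neg at hc
  exact absurd h (not_le.2 (lt_qf_of_cdf_lt hC ht1 hc))

lemma qf_right_cont {μ : Measure ℝ} {C : ℝ} (hC : 1 ≤ cdf μ C)
    (hlow : ∀ x, x < -C → cdf μ x ≤ 0) {t ε : ℝ} (ht : 0 ≤ t) (ht1 : t < 1) (hε : 0 < ε) :
    ∃ s, t < s ∧ s < 1 ∧ qf μ s ≤ qf μ t + ε := by
  have hx : t < cdf μ (qf μ t + ε/2) := by
    by_contra hc
    push_neg at hc
    obtain ⟨y, hy, hy2⟩ := exists_lt_of_csInf_lt (qf_set_nonempty hC ht1)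
      (show qf μ t < qf μ t + ε/2 by linarith)
    simp only [Set.mem_setOf_eq] at hy
    have := (cdf μ).mono hy2.le
    linarith
  set c := min (cdf μ (qf μ t + ε/2)) 1 with hcdef
  have htc : t < c := lt_min hx ht1
  have hc1 : c ≤ 1 := min_le_right _ _
  refine ⟨(t + c)/2, by linarith, by linarith, ?_⟩
  have : qf μ ((t+c)/2) ≤ qf μ t + ε/2 := by
    refine qf_le_of_lt_cdf hlow (by linarith) ?_
    calc (t+c)/2 < c := by linarith
    _ ≤ cdf μ (qf μ t + ε/2) := min_le_left _ _
  linarith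



/-- monotone extension of qf to all of ℝ -/
noncomputable def qext (μ : Measure ℝ) (C : ℝ) (t : ℝ) : ℝ :=
  if t < 1 then qf μ (max t 0) else C

section qext
variable {μ : Measure ℝ} {C : ℝ} (hC : 1 ≤ cdf μ C) (hlow : ∀ x, x < -C → cdf μ x ≤ 0)
include hC hlow

lemma qext_eq_qf {t : ℝ} (ht0 : 0 < t) (ht1 : t < 1) : qext μ C t = qf μ t := by
  rw [qext, if_pos ht1, max_eq_left ht0.le]

lemma qext_mono : Monotone (qext μ C) := by
  intro t t' htt
  rcases lt_or_ge t' 1 with h' | h'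
  · rw [qext, qext, if_pos h', if_pos (lt_of_le_of_lt htt h')]
    exact qf_monoOn hC hlow (le_max_right _ _) (max_lt h' one_pos)
      (max_le_max htt le_rfl)
  · rw [qext, qext, if_neg (not_lt.2 h')]
    split
    · exact qf_le_C hC hlow (le_max_right _ _) (by rename_i h; simpa [h] using max_lt h one_pos)
    · exact le_rfl
end qext

section lemA
variable {μ : Measure ℝ} [IsProbabilityMeasure μ] {C : ℝ}
  (hC : 1 ≤ cdf μ C) (hlow : ∀ x, x < -C → cdf μ x ≤ 0)
include hC hlow

lemma unif_prob : IsProbabilityMeasure (volume.restrict (Ioo (0:ℝ) 1)) :=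
  ⟨by simp [Real.volume_Ioo]⟩

lemma map_qext_eq : (volume.restrict (Ioo (0:ℝ) 1)).map (qext μ C) = μ := by
  haveI : IsProbabilityMeasure (volume.restrict (Ioo (0:ℝ) 1)) := ⟨by simp [Real.volume_Ioo]⟩
  have hqm : Measurable (qext μ C) := (qext_mono hC hlow).measurable
  haveI : IsProbabilityMeasure ((volume.restrict (Ioo (0:ℝ) 1)).map (qext μ C)) :=
    Measure.isProbabilityMeasure_map hqm.aemeasurable
  refine MeasureTheory.Measure.ext_of_Iic _ _ (fun x => ?_)
  rw [Measure.map_apply hqm measurableSet_Iic, Measure.restrict_apply (hqm measurableSet_Iic),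
    ← ofReal_cdf μ x]
  have hF0 : 0 ≤ cdf μ x := cdf_nonneg _ _
  have hF1 : cdf μ x ≤ 1 := cdf_le_one _ _
  have sub1 : Ioo (0:ℝ) (cdf μ x) ⊆ qext μ C ⁻¹' Iic x ∩ Ioo 0 1 := by
    intro t ht
    refine ⟨?_, ht.1, lt_of_lt_of_le ht.2 hF1⟩
    simp only [Set.mem_preimage, Set.mem_Iic]
    rw [qext_eq_qf hC hlow ht.1 (lt_of_lt_of_le ht.2 hF1)]
    exact qf_le_of_lt_cdf hlow ht.1.le ht.2
  have sub2 : qext μ C ⁻¹' Iic x ∩ Ioo 0 1 ⊆ Ioc (0:ℝ) (cdf μ x) := by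
    rintro t ⟨h1, h2⟩
    simp only [Set.mem_preimage, Set.mem_Iic] at h1
    rw [qext_eq_qf hC hlow h2.1 h2.2] at h1
    exact ⟨h2.1, le_cdf_of_qf_le hC h2.2 h1⟩
  have hvIoc : volume (Ioc (0:ℝ) (cdf μ x)) = ENNReal.ofReal (cdf μ x) := by
    rw [Real.volume_Ioc, sub_zero]
  have hvIoo : volume (Ioo (0:ℝ) (cdf μ x)) = ENNReal.ofReal (cdf μ x) := by
    rw [Real.volume_Ioo, sub_zero]
  refine le_antisymm (hvIoc ▸ measure_mono sub2) (hvIoo ▸ measure_mono sub1)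
end lemA

lemma qf_map_unif {g : ℝ → ℝ} (hg : Monotone g) {D : ℝ}
    (hgD : ∀ s ∈ Ioo (0:ℝ) 1, |g s| ≤ D)
    (hrc : ∀ t ∈ Ioo (0:ℝ) 1, ∀ ε, 0 < ε → ∃ s, t < s ∧ s < 1 ∧ g s ≤ g t + ε)
    {t : ℝ} (ht : t ∈ Ioo (0:ℝ) 1) :
    qf ((volume.restrict (Ioo (0:ℝ) 1)).map g) t = g t := by
  haveI : IsProbabilityMeasure (volume.restrict (Ioo (0:ℝ) 1)) := ⟨by simp [Real.volume_Ioo]⟩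
  set ν := (volume.restrict (Ioo (0:ℝ) 1)).map g with hν
  have hgm : Measurable g := hg.measurable
  haveI : IsProbabilityMeasure ν := Measure.isProbabilityMeasure_map hgm.aemeasurable
  have happ : ∀ x, ν (Iic x) = volume (g ⁻¹' Iic x ∩ Ioo 0 1) := fun x => by
    rw [hν, Measure.map_apply hgm measurableSet_Iic,
      Measure.restrict_apply (hgm measurableSet_Iic)]
  have hcdf : ∀ x, cdf ν x = (volume (g ⁻¹' Iic x ∩ Ioo 0 1)).toReal := fun x => by
    rw [cdf_eq_real, measureReal_def, happ]
  have hCν : 1 ≤ cdf ν D := by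
    rw [hcdf]
    have hsub : Ioo (0:ℝ) 1 ⊆ g ⁻¹' Iic D ∩ Ioo 0 1 := fun s hs =>
      ⟨(abs_le.1 (hgD s hs)).2, hs⟩
    have h1 : (1:ℝ≥0∞) ≤ volume (g ⁻¹' Iic D ∩ Ioo 0 1) := by
      calc (1:ℝ≥0∞) = volume (Ioo (0:ℝ) 1) := by simp [Real.volume_Ioo]
      _ ≤ _ := measure_mono hsub
    have h2 : volume (g ⁻¹' Iic D ∩ Ioo 0 1) ≤ 1 := by
      calc volume (g ⁻¹' Iic D ∩ Ioo 0 1) ≤ volume (Ioo (0:ℝ) 1) :=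
        measure_mono inter_subset_right
      _ = 1 := by simp [Real.volume_Ioo]
    rw [le_antisymm h2 h1]
    simp
  have hlowν : ∀ x, x < -D → cdf ν x ≤ 0 := by
    intro x hx
    rw [hcdf]
    have : g ⁻¹' Iic x ∩ Ioo 0 1 = ∅ := by
      ext s
      simp only [Set.mem_inter_iff, Set.mem_preimage, Set.mem_Iic, Set.mem_empty_iff_false,
        iff_false, not_and]
      intro hgs hs
      exact absurd (le_trans (neg_le_of_abs_le (hgD s hs)) hgs) (not_le.2 hx)
    rw [this]
    simp
  refine le_antisymm ?_ ?_
  · refine le_of_forall_pos_le_add (fun ε hε => ?_)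
    obtain ⟨s, hts, hs1, hgs⟩ := hrc t ht ε hε
    have hcd : t < cdf ν (g s) := by
      rw [hcdf]
      have hsub : Ioc (0:ℝ) s ⊆ g ⁻¹' Iic (g s) ∩ Ioo 0 1 := fun s' hs' =>
        ⟨hg hs'.2, hs'.1, lt_of_le_of_lt hs'.2 hs1⟩
      have : ENNReal.ofReal s ≤ volume (g ⁻¹' Iic (g s) ∩ Ioo 0 1) := by
        calc ENNReal.ofReal s = volume (Ioc (0:ℝ) s) := by rw [Real.volume_Ioc, sub_zero]
        _ ≤ _ := measure_mono hsub
      have hfin : volume (g ⁻¹' Iic (g s) ∩ Ioo 0 1) ≠ ⊤ := by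
        rw [← happ]; exact measure_ne_top ν _
      have := ENNReal.toReal_mono hfin this
      rw [ENNReal.toReal_ofReal (le_of_lt (lt_trans ht.1 hts))] at this
      linarith [lt_of_lt_of_le hts this]
    exact le_trans (qf_le_of_lt_cdf hlowν ht.1.le hcd) hgs
  · refine le_csInf (qf_set_nonempty hCν ht.2) (fun x hx => ?_)
    simp only [Set.mem_setOf_eq] at hx
    rw [hcdf] at hx
    by_contra hcon
    push_neg at hcon
    have hsub : g ⁻¹' Iic x ∩ Ioo 0 1 ⊆ Ioc (0:ℝ) t := by
      rintro s ⟨h1, h2⟩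
      simp only [Set.mem_preimage, Set.mem_Iic] at h1
      refine ⟨h2.1, ?_⟩
      by_contra hst
      push_neg at hst
      exact absurd (le_trans (hg hst.le) h1) (not_le.2 hcon)
    have : volume (g ⁻¹' Iic x ∩ Ioo 0 1) ≤ ENNReal.ofReal t := by
      calc volume (g ⁻¹' Iic x ∩ Ioo 0 1) ≤ volume (Ioc (0:ℝ) t) := measure_mono hsub
      _ = ENNReal.ofReal t := by rw [Real.volume_Ioc, sub_zero]
    have h2 := ENNReal.toReal_mono (by simp) this
    rw [ENNReal.toReal_ofReal ht.1.le] at h2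
    linarith



lemma qext_abs_le {μ : Measure ℝ} {C : ℝ} (hC : 1 ≤ cdf μ C)
    (hlow : ∀ x, x < -C → cdf μ x ≤ 0) (h0 : 0 ≤ C) (t : ℝ) : |qext μ C t| ≤ C := by
  rw [abs_le, qext]
  split
  · next h =>
    exact ⟨neg_C_le_qf hC hlow (le_max_right _ _) (max_lt h one_pos),
      qf_le_C hC hlow (le_max_right _ _) (max_lt h one_pos)⟩
  · exact ⟨neg_le_self h0, le_rfl⟩

/-- cdf hyps from an a.e. bound -/
lemma cdf_hyps {Ω : Type*} [MeasurableSpace Ω] (P : Measure Ω) [IsProbabilityMeasure P]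
    (Z : Ω → ℝ) (hZm : Measurable Z) {C : ℝ} (hC : ∀ᵐ ω ∂P, |Z ω| ≤ C) (h0 : 0 ≤ C) :
    1 ≤ cdf (P.map Z) C ∧ ∀ x, x < -C → cdf (P.map Z) x ≤ 0 := by
  haveI : IsProbabilityMeasure (P.map Z) := Measure.isProbabilityMeasure_map hZm.aemeasurable
  constructor
  · rw [cdf_eq_real, measureReal_def, Measure.map_apply hZm measurableSet_Iic]
    have h1 : P (Z ⁻¹' Iic C)ᶜ = 0 := by
      refine measure_mono_null ?_ (ae_iff.1 hC)
      intro ω hω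
      simp only [Set.mem_compl_iff, Set.mem_preimage, Set.mem_Iic, not_le] at hω ⊢
      simp only [Set.mem_setOf_eq, not_le]
      exact lt_of_lt_of_le hω (le_abs_self _)
    rw [prob_compl_eq_zero_iff (μ := P) (hZm (measurableSet_Iic (a := C)))] at h1
    rw [h1]; simp
  · intro x hx
    rw [cdf_eq_real, measureReal_def, Measure.map_apply hZm measurableSet_Iic]
    have h1 : P (Z ⁻¹' Iic x) = 0 := by
      refine measure_mono_null ?_ (ae_iff.1 hC)
      intro ω hω
      simp only [Set.mem_preimage, Set.mem_Iic] at hω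
      simp only [Set.mem_setOf_eq, not_le]
      have : Z ω < -C := lt_of_le_of_lt hω hx
      calc C < -Z ω := by linarith
      _ ≤ |Z ω| := neg_le_abs _
    rw [h1]; simp


end aux

/-- For a law-invariant comonotonic-convex monetary risk measure `ρ` on a nonatomic space,
the set of quantile functions of elements of `𝒜_ρ` is convex: for `Z₁, Z₂ ∈ 𝒜_ρ` and
`α ∈ [0,1]`, `α q_{Z₁} + (1−α) q_{Z₂}` is the quantile function of some element of `𝒜_ρ`. -/
theorem stmt19 {Ω : Type*} [MeasurableSpace Ω] (P : Measure Ω) [IsProbabilityMeasure P]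
    (U : Ω → ℝ) (hU : Measurable U)
    (hUd : P.map U = volume.restrict (Ioo (0 : ℝ) 1))
    (ρ : (Ω → ℝ) → ℝ)
    (hmono : ∀ X Y : Ω → ℝ, MemLinf P X → MemLinf P Y →
      (∀ᵐ ω ∂P, X ω ≤ Y ω) → ρ Y ≤ ρ X)
    (hTI : ∀ X : Ω → ℝ, MemLinf P X → ∀ m : ℝ, ρ (fun ω => X ω + m) = ρ X - m)
    (hLI : ∀ X Y : Ω → ℝ, MemLinf P X → MemLinf P Y → P.map X = P.map Y → ρ X = ρ Y)
    (hCoMcv : ∀ X Y : Ω → ℝ, MemLinf P X → MemLinf P Y → Comonotonic P X Y →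
      ∀ α : ℝ, 0 ≤ α → α ≤ 1 →
        ρ (fun ω => α * X ω + (1 - α) * Y ω) ≤ α * ρ X + (1 - α) * ρ Y)
    (Z₁ Z₂ : Ω → ℝ) (hZ₁ : MemLinf P Z₁) (hZ₂ : MemLinf P Z₂)
    (hZ₁A : ρ Z₁ ≤ 0) (hZ₂A : ρ Z₂ ≤ 0)
    (α : ℝ) (hα0 : 0 ≤ α) (hα1 : α ≤ 1) :
    ∃ W : Ω → ℝ, MemLinf P W ∧ ρ W ≤ 0 ∧
      ∀ t ∈ Ioo (0 : ℝ) 1, uq P W t = α * uq P Z₁ t + (1 - α) * uq P Z₂ t := by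

  obtain ⟨hZ₁m, D₁, hD₁⟩ := hZ₁
  obtain ⟨hZ₂m, D₂, hD₂⟩ := hZ₂
  set C₁ := max D₁ 0 with hC₁def
  set C₂ := max D₂ 0 with hC₂def
  have hC₁0 : 0 ≤ C₁ := le_max_right _ _
  have hC₂0 : 0 ≤ C₂ := le_max_right _ _
  have hD₁' : ∀ᵐ ω ∂P, |Z₁ ω| ≤ C₁ := hD₁.mono fun ω h => h.trans (le_max_left _ _)
  have hD₂' : ∀ᵐ ω ∂P, |Z₂ ω| ≤ C₂ := hD₂.mono fun ω h => h.trans (le_max_left _ _)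
  set μ₁ := P.map Z₁ with hμ₁
  set μ₂ := P.map Z₂ with hμ₂
  haveI : IsProbabilityMeasure μ₁ := Measure.isProbabilityMeasure_map hZ₁m.aemeasurable
  haveI : IsProbabilityMeasure μ₂ := Measure.isProbabilityMeasure_map hZ₂m.aemeasurable
  obtain ⟨hcdf₁, hlow₁⟩ := cdf_hyps P Z₁ hZ₁m hD₁' hC₁0
  obtain ⟨hcdf₂, hlow₂⟩ := cdf_hyps P Z₂ hZ₂m hD₂' hC₂0
  set q₁ := qext μ₁ C₁ with hq₁def
  set q₂ := qext μ₂ C₂ with hq₂def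
  have hq₁mono : Monotone q₁ := qext_mono hcdf₁ hlow₁
  have hq₂mono : Monotone q₂ := qext_mono hcdf₂ hlow₂
  have hq₁m : Measurable q₁ := hq₁mono.measurable
  have hq₂m : Measurable q₂ := hq₂mono.measurable
  set X₁ := fun ω => q₁ (U ω) with hX₁def
  set X₂ := fun ω => q₂ (U ω) with hX₂def
  have hX₁map : P.map X₁ = μ₁ := by
    have : P.map X₁ = (P.map U).map q₁ := (Measure.map_map hq₁m hU).symm
    rw [this, hUd, map_qext_eq hcdf₁ hlow₁]
  have hX₂map : P.map X₂ = μ₂ := by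
    have : P.map X₂ = (P.map U).map q₂ := (Measure.map_map hq₂m hU).symm
    rw [this, hUd, map_qext_eq hcdf₂ hlow₂]
  have hX₁mem : MemLinf P X₁ :=
    ⟨hq₁m.comp hU, C₁, ae_of_all _ fun ω => qext_abs_le hcdf₁ hlow₁ hC₁0 _⟩
  have hX₂mem : MemLinf P X₂ :=
    ⟨hq₂m.comp hU, C₂, ae_of_all _ fun ω => qext_abs_le hcdf₂ hlow₂ hC₂0 _⟩
  have hρX₁ : ρ X₁ = ρ Z₁ := hLI X₁ Z₁ hX₁mem ⟨hZ₁m, D₁, hD₁⟩ hX₁map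
  have hρX₂ : ρ X₂ = ρ Z₂ := hLI X₂ Z₂ hX₂mem ⟨hZ₂m, D₂, hD₂⟩ hX₂map
  have hcomon : Comonotonic P X₁ X₂ := by
    refine ⟨Set.univ, MeasurableSet.univ, measure_univ, fun ω _ ω' _ => ?_⟩
    rcases le_total (U ω') (U ω) with h | h
    · exact mul_nonneg (sub_nonneg.2 (hq₁mono h)) (sub_nonneg.2 (hq₂mono h))
    · nlinarith [sub_nonpos.2 (hq₁mono h), sub_nonpos.2 (hq₂mono h)]
  set W := fun ω => α * X₁ ω + (1 - α) * X₂ ω with hWdef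
  have hWmem : MemLinf P W := by
    refine ⟨(measurable_const.mul (hq₁m.comp hU)).add (measurable_const.mul (hq₂m.comp hU)),
      C₁ + C₂, ae_of_all _ fun ω => ?_⟩
    have b₁ := qext_abs_le hcdf₁ hlow₁ hC₁0 (U ω)
    have b₂ := qext_abs_le hcdf₂ hlow₂ hC₂0 (U ω)
    calc |W ω| ≤ |α * X₁ ω| + |(1 - α) * X₂ ω| := abs_add_le _ _
    _ = α * |X₁ ω| + (1 - α) * |X₂ ω| := by
        rw [abs_mul, abs_mul, abs_of_nonneg hα0, abs_of_nonneg (show (0:ℝ) ≤ 1 - α by linarith)]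
    _ ≤ C₁ + C₂ := by nlinarith [abs_nonneg (X₁ ω), abs_nonneg (X₂ ω)]
  have hρW : ρ W ≤ 0 := by
    have h := hCoMcv X₁ X₂ hX₁mem hX₂mem hcomon α hα0 hα1
    rw [hρX₁, hρX₂] at h
    nlinarith
  refine ⟨W, hWmem, hρW, fun t ht => ?_⟩
  set g := fun s => α * q₁ s + (1 - α) * q₂ s with hgdef
  have hgmono : Monotone g := fun a b h =>
    add_le_add (mul_le_mul_of_nonneg_left (hq₁mono h) hα0)
      (mul_le_mul_of_nonneg_left (hq₂mono h) (by linarith))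
  have hWmap : P.map W = (volume.restrict (Ioo (0:ℝ) 1)).map g := by
    have : P.map W = (P.map U).map g := (Measure.map_map hgmono.measurable hU).symm
    rw [this, hUd]
  have hgD : ∀ s ∈ Ioo (0:ℝ) 1, |g s| ≤ C₁ + C₂ := by
    intro s _
    have b₁ := qext_abs_le hcdf₁ hlow₁ hC₁0 s
    have b₂ := qext_abs_le hcdf₂ hlow₂ hC₂0 s
    calc |g s| ≤ |α * q₁ s| + |(1 - α) * q₂ s| := abs_add_le _ _
    _ = α * |q₁ s| + (1 - α) * |q₂ s| := by
        rw [abs_mul, abs_mul, abs_of_nonneg hα0, abs_of_nonneg (show (0:ℝ) ≤ 1 - α by linarith)]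
    _ ≤ C₁ + C₂ := by nlinarith [abs_nonneg (q₁ s), abs_nonneg (q₂ s)]
  have hrc : ∀ t ∈ Ioo (0:ℝ) 1, ∀ ε, 0 < ε → ∃ s, t < s ∧ s < 1 ∧ g s ≤ g t + ε := by
    rintro t ⟨ht0, ht1⟩ ε hε
    obtain ⟨s₁, hs₁t, hs₁1, hs₁⟩ := qf_right_cont hcdf₁ hlow₁ ht0.le ht1 hε
    obtain ⟨s₂, hs₂t, hs₂1, hs₂⟩ := qf_right_cont hcdf₂ hlow₂ ht0.le ht1 hε
    refine ⟨min s₁ s₂, lt_min hs₁t hs₂t, lt_of_le_of_lt (min_le_left _ _) hs₁1, ?_⟩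
    have hs0 : 0 < min s₁ s₂ := lt_trans ht0 (lt_min hs₁t hs₂t)
    have hsl1 : min s₁ s₂ < 1 := lt_of_le_of_lt (min_le_left _ _) hs₁1
    have e₁ : q₁ (min s₁ s₂) ≤ q₁ t + ε := by
      rw [hq₁def, qext_eq_qf hcdf₁ hlow₁ hs0 hsl1, qext_eq_qf hcdf₁ hlow₁ ht0 ht1]
      exact le_trans (qf_monoOn hcdf₁ hlow₁ hs0.le hs₁1 (min_le_left _ _)) hs₁
    have e₂ : q₂ (min s₁ s₂) ≤ q₂ t + ε := by
      rw [hq₂def, qext_eq_qf hcdf₂ hlow₂ hs0 hsl1, qext_eq_qf hcdf₂ hlow₂ ht0 ht1]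
      exact le_trans (qf_monoOn hcdf₂ hlow₂ hs0.le hs₂1 (min_le_right _ _)) hs₂
    show α * q₁ (min s₁ s₂) + (1 - α) * q₂ (min s₁ s₂) ≤ α * q₁ t + (1 - α) * q₂ t + ε
    nlinarith [mul_le_mul_of_nonneg_left e₁ hα0,
      mul_le_mul_of_nonneg_left e₂ (show (0:ℝ) ≤ 1 - α by linarith)]
  have huqW : uq P W t = g t := by
    have : uq P W t = qf (P.map W) t := rfl
    rw [this, hWmap, qf_map_unif hgmono hgD hrc ht]
  have huq₁ : uq P Z₁ t = q₁ t := by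
    have : uq P Z₁ t = qf μ₁ t := rfl
    rw [this]
    exact (qext_eq_qf hcdf₁ hlow₁ ht.1 ht.2).symm
  have huq₂ : uq P Z₂ t = q₂ t := by
    have : uq P Z₂ t = qf μ₂ t := rfl
    rw [this]
    exact (qext_eq_qf hcdf₂ hlow₂ ht.1 ht.2).symm
  rw [huqW, huq₁, huq₂]
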